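/- Let u(x,y,z,w) = sin(x+z)·cosh(y+w), v(x,y,z,w) = −cos(x+z)·sinh(y+w), and f = (u, v, −u, −v) : ℝ⁴ → ℝ⁴. Then p = (x,y,z,w) is a Lagrangian point of Γ_f (i.e. Df(p) is self-adjoint) if and only if cos(x+z) = 0 and y + w = 0. Hence the set of Lagrangian points of Γ_f is the infinite discrete family of parallel 2-planes ⋃_{k∈ℤ} { (a, b, π/2 + kπ − a, −b) : a, b ∈ ℝ }, i.e. the affine planes through (0, 0, π/2 + kπ, 0) spanned by (1,0,−1,0) and (0,1,0,−1). -/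

import Mathlib

/-!
STATEMENT 8: With `u(x,y,z,w) = sin(x+z)·cosh(y+w)`, `v(x,y,z,w) = −cos(x+z)·sinh(y+w)`
and `f = (u, v, −u, −v)`, a point `p = (x,y,z,w)` is a Lagrangian point of `Γ_f`
(i.e. `Df(p)` is self-adjoint) iff `cos(x+z) = 0` and `y + w = 0`. Hence the set
of Lagrangian points is `⋃_{k∈ℤ} {(a, b, π/2 + kπ − a, −b) : a, b ∈ ℝ}`.
-/

open scoped RealInnerProductSpace

noncomputable section

abbrev E4 : Type := EuclideanSpace ℝ (Fin 4)

noncomputable def mk4 (a b c d : ℝ) : E4 := (WithLp.equiv 2 (Fin 4 → ℝ)).symm ![a, b, c, d]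

noncomputable def u8 (p : E4) : ℝ := Real.sin (p 0 + p 2) * Real.cosh (p 1 + p 3)

noncomputable def v8 (p : E4) : ℝ := -(Real.cos (p 0 + p 2) * Real.sinh (p 1 + p 3))

noncomputable def f8 : E4 → E4 := fun p => mk4 (u8 p) (v8 p) (-(u8 p)) (-(v8 p))

set_option maxHeartbeats 1000000
set_option synthInstance.maxHeartbeats 400000

noncomputable def Mm (p : E4) : Matrix (Fin 4) (Fin 4) ℝ :=
  let c := Real.cos (p 0 + p 2) * Real.cosh (p 1 + p 3)
  let s := Real.sin (p 0 + p 2) * Real.sinh (p 1 + p 3)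
  !![c, s, c, s; s, -c, s, -c; -c, -s, -c, -s; -s, c, -s, c]

noncomputable def Dp (p : E4) : E4 →L[ℝ] E4 := Matrix.toEuclideanCLM (𝕜 := ℝ) (Mm p)

lemma proj_apply (i : Fin 4) (p : E4) : (EuclideanSpace.proj (𝕜 := ℝ) i) p = p i := rfl

lemma hL02 (p : E4) : HasFDerivAt (fun q : E4 => q 0 + q 2)
    ((EuclideanSpace.proj (𝕜 := ℝ) 0 + EuclideanSpace.proj (𝕜 := ℝ) 2 : E4 →L[ℝ] ℝ)) p :=
  ((EuclideanSpace.proj (𝕜 := ℝ) (0 : Fin 4)).hasFDerivAt.add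
    (EuclideanSpace.proj (𝕜 := ℝ) (2 : Fin 4)).hasFDerivAt)

lemma hL13 (p : E4) : HasFDerivAt (fun q : E4 => q 1 + q 3)
    ((EuclideanSpace.proj (𝕜 := ℝ) 1 + EuclideanSpace.proj (𝕜 := ℝ) 3 : E4 →L[ℝ] ℝ)) p :=
  ((EuclideanSpace.proj (𝕜 := ℝ) (1 : Fin 4)).hasFDerivAt.add
    (EuclideanSpace.proj (𝕜 := ℝ) (3 : Fin 4)).hasFDerivAt)

noncomputable def L02 : E4 →L[ℝ] ℝ := EuclideanSpace.proj 0 + EuclideanSpace.proj 2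
noncomputable def L13 : E4 →L[ℝ] ℝ := EuclideanSpace.proj 1 + EuclideanSpace.proj 3

lemma hu (p : E4) : HasFDerivAt u8
    ((Real.sin (p 0 + p 2) • (Real.sinh (p 1 + p 3) • L13)) +
     (Real.cosh (p 1 + p 3) • (Real.cos (p 0 + p 2) • L02))) p := by
  have h1 : HasFDerivAt (fun q : E4 => Real.sin (q 0 + q 2))
      (Real.cos (p 0 + p 2) • L02) p :=
    (Real.hasDerivAt_sin _).comp_hasFDerivAt p (hL02 p)
  have h2 : HasFDerivAt (fun q : E4 => Real.cosh (q 1 + q 3))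
      (Real.sinh (p 1 + p 3) • L13) p :=
    (Real.hasDerivAt_cosh _).comp_hasFDerivAt p (hL13 p)
  exact h1.mul h2

lemma hv (p : E4) : HasFDerivAt v8
    (-((Real.cos (p 0 + p 2) • (Real.cosh (p 1 + p 3) • L13)) +
      (Real.sinh (p 1 + p 3) • (-Real.sin (p 0 + p 2) • L02)))) p := by
  have h1 : HasFDerivAt (fun q : E4 => Real.cos (q 0 + q 2))
      (-Real.sin (p 0 + p 2) • L02) p :=
    (Real.hasDerivAt_cos _).comp_hasFDerivAt p (hL02 p)
  have h2 : HasFDerivAt (fun q : E4 => Real.sinh (q 1 + q 3))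
      (Real.cosh (p 1 + p 3) • L13) p :=
    (Real.hasDerivAt_sinh _).comp_hasFDerivAt p (hL13 p)
  exact (h1.mul h2).neg

lemma Dp_apply (p x : E4) (i : Fin 4) : Dp p x i = ∑ j, Mm p i j * x j := by
  have h := congrFun (Matrix.ofLp_toEuclideanCLM (𝕜 := ℝ) (Mm p) x) i
  exact h.trans (by simp [Matrix.mulVec, dotProduct])

lemma hasD (p : E4) : HasFDerivAt f8 (Dp p) p := by
  have hu' := hu p
  have hv' := hv p
  have key : HasFDerivAt f8
      ((PiLp.continuousLinearEquiv 2 ℝ (fun _ : Fin 4 => ℝ)).symm.toContinuousLinearMap.comp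
        (ContinuousLinearMap.pi ![
          ((Real.sin (p 0 + p 2) • (Real.sinh (p 1 + p 3) • L13)) +
            (Real.cosh (p 1 + p 3) • (Real.cos (p 0 + p 2) • L02))),
          (-((Real.cos (p 0 + p 2) • (Real.cosh (p 1 + p 3) • L13)) +
            (Real.sinh (p 1 + p 3) • (-Real.sin (p 0 + p 2) • L02)))),
          -((Real.sin (p 0 + p 2) • (Real.sinh (p 1 + p 3) • L13)) +
            (Real.cosh (p 1 + p 3) • (Real.cos (p 0 + p 2) • L02))),
          ((Real.cos (p 0 + p 2) • (Real.cosh (p 1 + p 3) • L13)) +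
            (Real.sinh (p 1 + p 3) • (-Real.sin (p 0 + p 2) • L02)))])) p := by
    apply HasFDerivAt.comp (f := fun q : E4 => (![u8 q, v8 q, -(u8 q), -(v8 q)] : Fin 4 → ℝ))
    · exact ((PiLp.continuousLinearEquiv 2 ℝ (fun _ : Fin 4 => ℝ)).symm.toContinuousLinearMap).hasFDerivAt
    · apply hasFDerivAt_pi.2
      intro i
      fin_cases i
      · exact hu'
      · exact hv'
      · exact hu'.neg
      · convert hv'.neg using 1 <;> simp [Pi.neg_def]
  convert key using 1
  ext x i
  rw [Dp_apply]
  fin_cases i <;>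
    simp [Mm, L02, L13, proj_apply, Fin.sum_univ_four] <;> ring

section part2
open Real

lemma fderivf8_eq (p : E4) : fderiv ℝ f8 p = Dp p := (hasD p).fderiv

lemma cC_sS_iff (p : E4) :
    (Real.cos (p 0 + p 2) * Real.cosh (p 1 + p 3) = 0 ∧
     Real.sin (p 0 + p 2) * Real.sinh (p 1 + p 3) = 0) ↔
    (Real.cos (p 0 + p 2) = 0 ∧ p 1 + p 3 = 0) := by
  have hch : Real.cosh (p 1 + p 3) ≠ 0 := (Real.cosh_pos (x := p 1 + p 3)).ne'
  constructor
  · rintro ⟨h1, h2⟩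
    have hc : Real.cos (p 0 + p 2) = 0 := by
      rcases mul_eq_zero.1 h1 with h | h
      · exact h
      · exact absurd h hch
    have hs : Real.sin (p 0 + p 2) ≠ 0 := by
      intro hs0
      have := Real.sin_sq_add_cos_sq (p 0 + p 2)
      rw [hs0, hc] at this; norm_num at this
    have hsh : Real.sinh (p 1 + p 3) = 0 := by
      rcases mul_eq_zero.1 h2 with h | h
      · exact absurd h hs
      · exact h
    exact ⟨hc, Real.sinh_eq_zero.1 hsh⟩
  · rintro ⟨h1, h2⟩
    rw [h1, h2]; simp

lemma adj_iff (p : E4) :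
    ContinuousLinearMap.adjoint (fderiv ℝ f8 p) = fderiv ℝ f8 p ↔
      (Real.cos (p 0 + p 2) = 0 ∧ p 1 + p 3 = 0) := by
  rw [fderivf8_eq, ← cC_sS_iff]
  have e := (Matrix.toEuclideanCLM (𝕜 := ℝ) (n := Fin 4))
  have hms : (Matrix.toEuclideanCLM (𝕜 := ℝ) (n := Fin 4)) (star (Mm p)) = star (Dp p) :=
    map_star (Matrix.toEuclideanCLM (𝕜 := ℝ) (n := Fin 4)) (Mm p)
  have key : ContinuousLinearMap.adjoint (Dp p) = Dp p ↔ star (Mm p) = Mm p := by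
    rw [← ContinuousLinearMap.star_eq_adjoint]
    constructor
    · intro h
      apply (Matrix.toEuclideanCLM (𝕜 := ℝ) (n := Fin 4)).injective
      exact hms.trans h
    · intro h
      show star (Dp p) = Dp p
      rw [← hms, h]; rfl
  rw [key]
  constructor
  · intro h
    have h02 := congrFun (congrFun h 0) 2
    have h03 := congrFun (congrFun h 0) 3
    simp [Mm, Matrix.star_apply] at h02 h03
    constructor <;> linarith
  · rintro ⟨h1, h2⟩
    ext i j
    fin_cases i <;> fin_cases j <;> simp [Mm, Matrix.star_apply, h1, h2] <;>
      simp [Matrix.vecHead, Matrix.vecTail]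

end part2

theorem stmt_8 :
    (∀ p : E4,
      ContinuousLinearMap.adjoint (fderiv ℝ f8 p) = fderiv ℝ f8 p ↔
        (Real.cos (p 0 + p 2) = 0 ∧ p 1 + p 3 = 0)) ∧
    {p : E4 | ContinuousLinearMap.adjoint (fderiv ℝ f8 p) = fderiv ℝ f8 p} =
      ⋃ k : ℤ, {p : E4 | ∃ a b : ℝ,
        p = mk4 a b (Real.pi / 2 + k * Real.pi - a) (-b)} := by
  refine ⟨adj_iff, ?_⟩
  ext p
  rw [Set.mem_setOf_eq, adj_iff, Set.mem_iUnion]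
  constructor
  · rintro ⟨h1, h2⟩
    obtain ⟨k, hk⟩ := Real.cos_eq_zero_iff.1 h1
    refine ⟨k, p 0, p 1, ?_⟩
    rw [mk4, Equiv.eq_symm_apply]
    funext i
    fin_cases i <;> simp
    · push_cast at hk ⊢; linarith
    · linarith
  · rintro ⟨k, a, b, rfl⟩
    have h0 : (mk4 a b (Real.pi / 2 + k * Real.pi - a) (-b)) 0 = a := rfl
    have h1 : (mk4 a b (Real.pi / 2 + k * Real.pi - a) (-b)) 1 = b := rfl
    have h2 : (mk4 a b (Real.pi / 2 + k * Real.pi - a) (-b)) 2 = Real.pi / 2 + k * Real.pi - a := rfl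
    have h3 : (mk4 a b (Real.pi / 2 + k * Real.pi - a) (-b)) 3 = -b := rfl
    rw [h0, h1, h2, h3]
    constructor
    · apply Real.cos_eq_zero_iff.2 ⟨k, by push_cast; ring⟩
    · ring


end
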